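/- Let (ρ_k) be nonnegative reals, m ≥ 2, ε > 0, and suppose Σ_{l=k₀}^∞ |ρ_{l+1} − ρ_l|^m · l^{m−1} < (ε/2)^m for some k₀. Then for any j with k_j ≥ k₀ and ρ_{k_j} > ε, one has ρ_k > ε/2 for all k with k_j ≤ k ≤ 2k_j, and consequently Σ_{k=k_j}^{2k_j} ρ_k^m / k ≥ (1/2)(ε/2)^m. -/

import Mathlib

theorem stmt10 (ρ : ℕ → ℝ) (hρ : ∀ k, 0 ≤ ρ k) (m : ℕ) (hm : 2 ≤ m)
    (ε : ℝ) (hε : 0 < ε) (k₀ : ℕ) (hk₀ : 1 ≤ k₀)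
    (f : ℕ → ℝ)
    (hf : ∀ l, f l = if k₀ ≤ l then |ρ (l + 1) - ρ l| ^ m * (l : ℝ) ^ (m - 1) else 0)
    (hsum : Summable f) (hlt : ∑' l, f l < (ε / 2) ^ m)
    (kj : ℕ) (hkj : k₀ ≤ kj) (hρj : ε < ρ kj) :
    (∀ k, kj ≤ k → k ≤ 2 * kj → ε / 2 < ρ k) ∧
    (1 / 2) * (ε / 2) ^ m ≤ ∑ k ∈ Finset.Icc kj (2 * kj), ρ k ^ m / k := by
  have hm0 : 0 < m := by omega
  have hkj1 : 1 ≤ kj := le_trans hk₀ hkj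
  have hε2 : (0:ℝ) < ε / 2 := by positivity
  have hfnn : ∀ l, 0 ≤ f l := by
    intro l; rw [hf]; split
    · positivity
    · exact le_refl 0
  have key : ∀ k, kj ≤ k → k ≤ 2 * kj → ε / 2 < ρ k := by
    intro k hk1 hk2
    set A := ∑ l ∈ Finset.Ico kj k, |ρ (l + 1) - ρ l| with hA
    have hAnn : 0 ≤ A := Finset.sum_nonneg fun _ _ => abs_nonneg _
    have htel : ρ k - ρ kj = ∑ l ∈ Finset.Ico kj k, (ρ (l + 1) - ρ l) := by
      rw [Finset.sum_Ico_eq_sub _ hk1, Finset.sum_range_sub, Finset.sum_range_sub]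
      ring
    have habs : |ρ k - ρ kj| ≤ A := by
      rw [htel]; exact Finset.abs_sum_le_sum_abs _ _
    have hAm : A ^ m < (ε / 2) ^ m := by
      rcases eq_or_lt_of_le hk1 with rfl | hlt'
      · have hA0 : A = 0 := by rw [hA, Finset.Ico_self, Finset.sum_empty]
        rw [hA0, zero_pow hm0.ne']
        positivity
      · have hcard : (Finset.Ico kj k).card = k - kj := Nat.card_Ico _ _
        have hcpos : 0 < k - kj := by omega
        have hcle : k - kj ≤ kj := by omega
        have h1 := pow_sum_div_card_le_sum_pow (f := fun l => |ρ (l + 1) - ρ l|)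
          (s := Finset.Ico kj k) (fun i _ => abs_nonneg _) (m - 1)
        rw [(by omega : m - 1 + 1 = m)] at h1
        have hcpow : (0:ℝ) < ((Finset.Ico kj k).card : ℝ) ^ (m - 1) := by
          rw [hcard]; positivity
        have h2 : A ^ m ≤ ((Finset.Ico kj k).card : ℝ) ^ (m - 1) *
            ∑ l ∈ Finset.Ico kj k, |ρ (l + 1) - ρ l| ^ m := by
          rw [div_le_iff₀ hcpow] at h1
          linarith [h1]
        have h3 : ((Finset.Ico kj k).card : ℝ) ^ (m - 1) *
            ∑ l ∈ Finset.Ico kj k, |ρ (l + 1) - ρ l| ^ m ≤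
            ∑ l ∈ Finset.Ico kj k, f l := by
          rw [Finset.mul_sum]
          apply Finset.sum_le_sum
          intro l hl
          rw [Finset.mem_Ico] at hl
          rw [hf l, if_pos (le_trans hkj hl.1)]
          rw [mul_comm]
          apply mul_le_mul_of_nonneg_left _ (by positivity)
          apply pow_le_pow_left₀ (by positivity)
          rw [hcard]
          exact_mod_cast le_trans (Nat.cast_le.mpr hcle) (Nat.cast_le.mpr hl.1)
        have h4 : ∑ l ∈ Finset.Ico kj k, f l ≤ ∑' l, f l :=
          Summable.sum_le_tsum _ (fun i _ => hfnn i) hsum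
        linarith
    have hAlt : A < ε / 2 := by
      by_contra hcon
      push_neg at hcon
      exact absurd hAm (not_lt.mpr (pow_le_pow_left₀ hε2.le hcon m))
    have h5 : ρ kj - ρ k ≤ A := by
      have := neg_abs_le (ρ k - ρ kj)
      linarith
    linarith
  refine ⟨key, ?_⟩
  have hterm : ∀ k ∈ Finset.Icc kj (2 * kj), (ε / 2) ^ m / (2 * kj : ℝ) ≤ ρ k ^ m / k := by
    intro k hk
    rw [Finset.mem_Icc] at hk
    have hkpos : (0:ℝ) < k := by exact_mod_cast lt_of_lt_of_le hkj1 hk.1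
    have hρk : ε / 2 ≤ ρ k := (key k hk.1 hk.2).le
    gcongr
    · exact pow_nonneg (hρ k) m
    · exact_mod_cast hk.2
  have hcard : (Finset.Icc kj (2 * kj)).card = kj + 1 := by
    rw [Nat.card_Icc]; omega
  have hsum2 := Finset.card_nsmul_le_sum (Finset.Icc kj (2 * kj)) _ _ hterm
  rw [hcard, nsmul_eq_mul] at hsum2
  have hkjR : (1:ℝ) ≤ (kj:ℝ) := by exact_mod_cast hkj1
  have hP : (0:ℝ) < (ε / 2) ^ m := by positivity
  have : (1 / 2) * (ε / 2) ^ m ≤ ((kj:ℝ) + 1) * ((ε / 2) ^ m / (2 * kj)) := by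
    rw [mul_div_assoc', le_div_iff₀ (by linarith)]
    nlinarith
  calc (1 / 2) * (ε / 2) ^ m ≤ ((kj:ℝ) + 1) * ((ε / 2) ^ m / (2 * kj)) := this
    _ ≤ _ := by exact_mod_cast hsum2
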